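/- arXiv:1711.02305 — 5 statements merged into one kernel-verified Lean document; each statement's English description precedes it below -/
import Mathlib

section
/- If R ∈ R^{k×d} satisfies |⟨R e_i, R e_i⟩ - 1| ≤ ε for all i and |⟨R e_i, R e_j⟩| ≤ ε for i ≠ j, then for any vector v ∈ R^d, ‖Rv‖₂ ≤ sqrt(‖v‖₂² + ε‖v‖₁²) ≤ ‖v‖₂ + sqrt(ε)·‖v‖₁. -/
theorem sqrt_add_le' (x y : ℝ) (hx : 0 ≤ x) (hy : 0 ≤ y) :
    Real.sqrt (x + y) ≤ Real.sqrt x + Real.sqrt y := by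
  have h : x + y ≤ (Real.sqrt x + Real.sqrt y) ^ 2 := by
    nlinarith [Real.sq_sqrt hx, Real.sq_sqrt hy, Real.sqrt_nonneg x, Real.sqrt_nonneg y,
      mul_nonneg (Real.sqrt_nonneg x) (Real.sqrt_nonneg y)]
  have := Real.sqrt_le_sqrt h
  rwa [Real.sqrt_sq (by positivity)] at this

/-- norm bound `‖Rv‖₂ ≤ sqrt(‖v‖₂² + ε‖v‖₁²) ≤ ‖v‖₂ + √ε ‖v‖₁`
under the approximate basis-orthonormality condition on `R`. -/
theorem stmt2 {d k : ℕ} (ε : ℝ) (hε : 0 ≤ ε) (R : Matrix (Fin k) (Fin d) ℝ)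
    (hdiag : ∀ i : Fin d,
      |(∑ a, R.mulVec (Pi.single i 1) a * R.mulVec (Pi.single i 1) a) - 1| ≤ ε)
    (hoff : ∀ i j : Fin d, i ≠ j →
      |∑ a, R.mulVec (Pi.single i 1) a * R.mulVec (Pi.single j 1) a| ≤ ε)
    (v : Fin d → ℝ) :
    Real.sqrt (∑ a, (R.mulVec v a) ^ 2) ≤
        Real.sqrt ((∑ i, (v i) ^ 2) + ε * (∑ i, |v i|) ^ 2) ∧
      Real.sqrt ((∑ i, (v i) ^ 2) + ε * (∑ i, |v i|) ^ 2) ≤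
        Real.sqrt (∑ i, (v i) ^ 2) + Real.sqrt ε * (∑ i, |v i|) := by
  have hsingle : ∀ (i : Fin d) (a : Fin k), R.mulVec (Pi.single i 1) a = R a i := by
    intro i a
    simp [Matrix.mulVec, dotProduct, Pi.single_apply, mul_ite]
  have hGdiag : ∀ i : Fin d, |(∑ a, R a i * R a i) - 1| ≤ ε := by
    intro i; simpa [hsingle] using hdiag i
  have hGoff : ∀ i j : Fin d, i ≠ j → |∑ a, R a i * R a j| ≤ ε := by
    intro i j h; simpa [hsingle] using hoff i j h
  have hexp : (∑ a, (R.mulVec v a) ^ 2)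
      = ∑ i, ∑ j, v i * v j * (∑ a, R a i * R a j) := by
    have h1 : ∀ a, (R.mulVec v a) ^ 2 = ∑ i, ∑ j, (v i * v j) * (R a i * R a j) := by
      intro a
      simp only [Matrix.mulVec, dotProduct, sq, Finset.sum_mul_sum]
      congr 1; ext i; congr 1; ext j; ring
    rw [Finset.sum_congr rfl fun a _ => h1 a, Finset.sum_comm]
    congr 1; ext i
    rw [Finset.sum_comm]
    congr 1; ext j
    rw [Finset.mul_sum]
  have hterm : ∀ i j : Fin d, v i * v j * (∑ a, R a i * R a j) ≤
      (if i = j then (v i) ^ 2 else 0) + |v i| * |v j| * ε := by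
    intro i j
    by_cases h : i = j
    · subst h
      rw [if_pos rfl]
      have h1 : (∑ a, R a i * R a i) ≤ 1 + ε := by
        have := abs_le.mp (hGdiag i); linarith [this.2]
      have h2 : v i * v i * (∑ a, R a i * R a i) ≤ v i * v i * (1 + ε) :=
        mul_le_mul_of_nonneg_left h1 (mul_self_nonneg _)
      have h3 : |v i| * |v i| = v i * v i := abs_mul_abs_self _
      nlinarith [sq_nonneg (v i)]
    · simp only [if_neg h, zero_add]
      calc v i * v j * (∑ a, R a i * R a j) ≤ |v i * v j * (∑ a, R a i * R a j)| :=
            le_abs_self _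
        _ = |v i| * |v j| * |∑ a, R a i * R a j| := by rw [abs_mul, abs_mul]
        _ ≤ |v i| * |v j| * ε :=
            mul_le_mul_of_nonneg_left (hGoff i j h) (by positivity)
  have hsum_rhs : ∑ i, ∑ j, ((if i = j then (v i) ^ 2 else 0) + |v i| * |v j| * ε)
      = (∑ i, (v i) ^ 2) + ε * (∑ i, |v i|) ^ 2 := by
    simp only [Finset.sum_add_distrib, Finset.sum_ite_eq, Finset.mem_univ, if_true]
    congr 1
    rw [sq, Finset.sum_mul_sum]
    rw [Finset.mul_sum]
    congr 1; ext i
    rw [Finset.mul_sum]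
    congr 1; ext j
    ring
  have hkey : (∑ a, (R.mulVec v a) ^ 2) ≤ (∑ i, (v i) ^ 2) + ε * (∑ i, |v i|) ^ 2 := by
    rw [hexp, ← hsum_rhs]
    exact Finset.sum_le_sum fun i _ => Finset.sum_le_sum fun j _ => hterm i j
  constructor
  · exact Real.sqrt_le_sqrt hkey
  · have h1 : Real.sqrt ((∑ i, (v i) ^ 2) + ε * (∑ i, |v i|) ^ 2)
        ≤ Real.sqrt (∑ i, (v i) ^ 2) + Real.sqrt (ε * (∑ i, |v i|) ^ 2) :=
      sqrt_add_le' _ _ (by positivity) (by positivity)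
    have h2 : Real.sqrt (ε * (∑ i, |v i|) ^ 2) = Real.sqrt ε * (∑ i, |v i|) := by
      rw [Real.sqrt_mul hε, Real.sqrt_sq (by positivity)]
    linarith
end

section
/- Let F: R^T -> R be convex differentiable, let K and K̂ be positive semidefinite T×T matrices, λ > 0, and define J(α) = F(α) + (1/(2λT²))αᵀKα and Ĵ(α) = F(α) + (1/(2λT²))αᵀK̂α. Let α* minimize J and α̂* minimize Ĵ. Then (1/(λT²)) (α̂* - α*)ᵀ K̂ (α̂* - α*) ≤ (1/(λT²)) (α* - α̂*)ᵀ (K̂ - K) α*. -/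
open Matrix

lemma stmt4_line {T : ℕ} (x d : Fin T → ℝ) (t : ℝ) :
    HasDerivAt (fun s : ℝ => x + s • d) d t := by
  simpa using ((hasDerivAt_id t).smul_const d).const_add x

lemma stmt4_sym {T : ℕ} {M : Matrix (Fin T) (Fin T) ℝ} (hM : M.PosSemidef) (x y : Fin T → ℝ) :
    x ⬝ᵥ M.mulVec y = y ⬝ᵥ M.mulVec x := by
  rw [Matrix.dotProduct_mulVec, ← Matrix.mulVec_transpose]
  rw [show Mᵀ = M from ?_, dotProduct_comm]
  have := hM.isHermitian.eq
  rwa [Matrix.conjTranspose_eq_transpose_of_trivial] at this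

lemma stmt4_derivF {T : ℕ} {F : (Fin T → ℝ) → ℝ} (hFdiff : Differentiable ℝ F)
    (x d : Fin T → ℝ) (t : ℝ) :
    HasDerivAt (fun s : ℝ => F (x + s • d)) (fderiv ℝ F (x + t • d) d) t := by
  have h := (hFdiff (x + t • d)).hasFDerivAt.comp_hasDerivAt t (stmt4_line x d t)
  exact h

lemma stmt4_stat {T : ℕ} {F : (Fin T → ℝ) → ℝ} (hFdiff : Differentiable ℝ F)
    (M : Matrix (Fin T) (Fin T) ℝ) (c : ℝ) (x : Fin T → ℝ)
    (hmin : ∀ α, F x + c * (x ⬝ᵥ M.mulVec x) ≤ F α + c * (α ⬝ᵥ M.mulVec α))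
    (d : Fin T → ℝ) :
    fderiv ℝ F x d + c * (x ⬝ᵥ M.mulVec d + d ⬝ᵥ M.mulVec x) = 0 := by
  set b := x ⬝ᵥ M.mulVec d + d ⬝ᵥ M.mulVec x with hb
  have hq : ∀ t : ℝ, (x + t • d) ⬝ᵥ M.mulVec (x + t • d)
      = x ⬝ᵥ M.mulVec x + t * b + t ^ 2 * (d ⬝ᵥ M.mulVec d) := by
    intro t
    simp only [hb, Matrix.mulVec_add, Matrix.mulVec_smul, dotProduct_add,
      add_dotProduct, dotProduct_smul, smul_dotProduct, smul_eq_mul]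
    ring
  have hq' : HasDerivAt (fun t : ℝ => (x + t • d) ⬝ᵥ M.mulVec (x + t • d)) b 0 := by
    have hpoly : HasDerivAt (fun t : ℝ =>
        x ⬝ᵥ M.mulVec x + t * b + t ^ 2 * (d ⬝ᵥ M.mulVec d)) b 0 := by
      have h1 : HasDerivAt (fun t : ℝ => t * b) b 0 := by
        simpa using (hasDerivAt_id (0:ℝ)).mul_const b
      have h2 : HasDerivAt (fun t : ℝ => t ^ 2 * (d ⬝ᵥ M.mulVec d)) 0 0 := by
        simpa using (hasDerivAt_pow 2 (0:ℝ)).mul_const (d ⬝ᵥ M.mulVec d)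
      have := ((h1.const_add (x ⬝ᵥ M.mulVec x)).add h2); rw [add_zero] at this; exact this
    exact hpoly.congr_of_eventuallyEq (Filter.Eventually.of_forall fun t => hq t)
  have hF0 : HasDerivAt (fun s : ℝ => F (x + s • d)) (fderiv ℝ F x d) 0 := by
    have := stmt4_derivF hFdiff x d 0
    simpa using this
  have hφ : HasDerivAt (fun t : ℝ => F (x + t • d) + c * ((x + t • d) ⬝ᵥ M.mulVec (x + t • d)))
      (fderiv ℝ F x d + c * b) 0 := hF0.add (hq'.const_mul c)
  have hloc : IsLocalMin (fun t : ℝ =>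
      F (x + t • d) + c * ((x + t • d) ⬝ᵥ M.mulVec (x + t • d))) 0 := by
    apply Filter.Eventually.of_forall
    intro t
    simpa using hmin (x + t • d)
  exact hloc.hasDerivAt_eq_zero hφ

lemma stmt4_mono {T : ℕ} {F : (Fin T → ℝ) → ℝ} (hFconv : ConvexOn ℝ Set.univ F)
    (hFdiff : Differentiable ℝ F) (x y : Fin T → ℝ) :
    fderiv ℝ F x (y - x) ≤ fderiv ℝ F y (y - x) := by
  set d := y - x with hd
  set ψ := fun t : ℝ => F (x + t • d) with hψ
  have hψconv : ConvexOn ℝ Set.univ ψ := by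
    have h := hFconv.comp_affineMap (AffineMap.lineMap x y : ℝ →ᵃ[ℝ] (Fin T → ℝ))
    have he : (F ∘ (AffineMap.lineMap x y : ℝ →ᵃ[ℝ] (Fin T → ℝ))) = ψ := by
      funext t
      simp [hψ, AffineMap.lineMap_apply, hd, add_comm]
    rw [he] at h
    simpa using h
  have hder : ∀ t : ℝ, HasDerivAt ψ (fderiv ℝ F (x + t • d) d) t :=
    fun t => stmt4_derivF hFdiff x d t
  have hmono := hψconv.monotoneOn_deriv (fun t _ => (hder t).differentiableAt)
  have h01 := hmono (Set.mem_univ 0) (Set.mem_univ 1) zero_le_one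
  rw [(hder 0).deriv, (hder 1).deriv] at h01
  simpa [hd] using h01

/-- perturbation bound between the minimizers of two
kernel-regularized convex objectives. -/
theorem stmt4 {T : ℕ} (hT : 0 < T) (lam : ℝ) (hlam : 0 < lam)
    (F : (Fin T → ℝ) → ℝ) (hFconv : ConvexOn ℝ Set.univ F)
    (hFdiff : Differentiable ℝ F)
    (K Khat : Matrix (Fin T) (Fin T) ℝ) (hK : K.PosSemidef)
    (hKhat : Khat.PosSemidef)
    (J Jhat : (Fin T → ℝ) → ℝ)
    (hJ : ∀ α, J α = F α + (1 / (2 * lam * (T : ℝ) ^ 2)) *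
      dotProduct α (K.mulVec α))
    (hJhat : ∀ α, Jhat α = F α + (1 / (2 * lam * (T : ℝ) ^ 2)) *
      dotProduct α (Khat.mulVec α))
    (αs : Fin T → ℝ) (hmin : ∀ α, J αs ≤ J α)
    (αh : Fin T → ℝ) (hminh : ∀ α, Jhat αh ≤ Jhat α) :
    (1 / (lam * (T : ℝ) ^ 2)) *
        dotProduct (αh - αs) (Khat.mulVec (αh - αs)) ≤
      (1 / (lam * (T : ℝ) ^ 2)) *
        dotProduct (αs - αh) ((Khat - K).mulVec αs) := by
  set c : ℝ := 1 / (2 * lam * (T : ℝ) ^ 2) with hc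
  have hT2 : (0:ℝ) < (T : ℝ) ^ 2 := by positivity
  have hcpos : 0 < c := by positivity
  set d : Fin T → ℝ := αh - αs with hd
  have hstat1 := stmt4_stat hFdiff K c αs
    (fun α => by simpa [hJ] using hmin α) d
  have hstat2 := stmt4_stat hFdiff Khat c αh
    (fun α => by simpa [hJhat] using hminh α) d
  have hmono := stmt4_mono hFconv hFdiff αs αh
  rw [← hd] at hmono
  -- use symmetry of K and Khat
  have hsK : αs ⬝ᵥ K.mulVec d = d ⬝ᵥ K.mulVec αs := stmt4_sym hK αs d
  have hsKh : αh ⬝ᵥ Khat.mulVec d = d ⬝ᵥ Khat.mulVec αh := stmt4_sym hKhat αh d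
  have key : d ⬝ᵥ Khat.mulVec αh ≤ d ⬝ᵥ K.mulVec αs := by
    have h1 : fderiv ℝ F αs d = -(c * (2 * (d ⬝ᵥ K.mulVec αs))) := by
      rw [hsK] at hstat1; linarith
    have h2 : fderiv ℝ F αh d = -(c * (2 * (d ⬝ᵥ Khat.mulVec αh))) := by
      rw [hsKh] at hstat2; linarith
    rw [h1, h2] at hmono
    nlinarith [hcpos]
  have expand1 : d ⬝ᵥ Khat.mulVec d = d ⬝ᵥ Khat.mulVec αh - d ⬝ᵥ Khat.mulVec αs := by
    rw [hd]
    simp [Matrix.mulVec_sub, dotProduct_sub]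
  have expand2 : (αs - αh) ⬝ᵥ (Khat - K).mulVec αs
      = d ⬝ᵥ K.mulVec αs - d ⬝ᵥ Khat.mulVec αs := by
    have : αs - αh = -d := by rw [hd]; abel
    rw [this]
    simp [Matrix.sub_mulVec, dotProduct_sub, neg_dotProduct]
    ring
  have hmain : d ⬝ᵥ Khat.mulVec d ≤ (αs - αh) ⬝ᵥ (Khat - K).mulVec αs := by
    rw [expand1, expand2]; linarith
  have hnonneg : (0:ℝ) ≤ 1 / (lam * (T : ℝ) ^ 2) := by positivity
  exact mul_le_mul_of_nonneg_left hmain hnonneg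
end

section
/- Under the hypotheses of the previous statement, and additionally assuming F is (1/(Tβ))-strongly convex with respect to the ℓ2 norm, the minimizers satisfy ‖α̂* - α*‖₁ ≤ 2Tβ‖Δ‖_∞, where Δ = (1/(λT))(K̂ - K)α*. -/
open Matrix in
lemma stmt5_symm_dot {T : ℕ} (M : Matrix (Fin T) (Fin T) ℝ) (hM : Mᵀ = M)
    (u v : Fin T → ℝ) :
    dotProduct u (M.mulVec v) = dotProduct v (M.mulVec u) := by
  rw [Matrix.dotProduct_mulVec, ← Matrix.mulVec_transpose, hM, dotProduct_comm]

open Matrix in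
lemma stmt5_expand {T : ℕ} (M : Matrix (Fin T) (Fin T) ℝ) (hM : Mᵀ = M)
    (u v : Fin T → ℝ) (t : ℝ) :
    dotProduct (u + t • v) (M.mulVec (u + t • v)) =
      dotProduct u (M.mulVec u) + 2 * t * dotProduct u (M.mulVec v)
        + t ^ 2 * dotProduct v (M.mulVec v) := by
  have hsym := stmt5_symm_dot M hM v u
  simp only [Matrix.mulVec_add, Matrix.mulVec_smul, dotProduct_add,
    add_dotProduct, dotProduct_smul, smul_dotProduct, smul_eq_mul]
  rw [hsym]; ring

set_option maxHeartbeats 1000000 in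
/-- with `F` additionally `1/(Tβ)`-strongly convex (w.r.t. ℓ2),
the dual minimizers satisfy `‖α̂* - α*‖₁ ≤ 2Tβ‖Δ‖_∞` where
`Δ = (1/(λT))(K̂ - K)α*`. -/
theorem stmt5 {T : ℕ} (hT : 0 < T) (lam β : ℝ) (hlam : 0 < lam) (hβ : 0 < β)
    (F : (Fin T → ℝ) → ℝ) (hFconv : ConvexOn ℝ Set.univ F)
    (hFdiff : Differentiable ℝ F)
    (hFsc : ∀ u v : Fin T → ℝ, ∀ t : ℝ, 0 ≤ t → t ≤ 1 →
      F (t • u + (1 - t) • v) ≤ t * F u + (1 - t) * F v -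
        (1 / (2 * (T : ℝ) * β)) * t * (1 - t) * ∑ i, (u i - v i) ^ 2)
    (K Khat : Matrix (Fin T) (Fin T) ℝ) (hK : K.PosSemidef)
    (hKhat : Khat.PosSemidef)
    (J Jhat : (Fin T → ℝ) → ℝ)
    (hJ : ∀ α, J α = F α + (1 / (2 * lam * (T : ℝ) ^ 2)) *
      dotProduct α (K.mulVec α))
    (hJhat : ∀ α, Jhat α = F α + (1 / (2 * lam * (T : ℝ) ^ 2)) *
      dotProduct α (Khat.mulVec α))
    (αs : Fin T → ℝ) (hmin : ∀ α, J αs ≤ J α)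
    (αh : Fin T → ℝ) (hminh : ∀ α, Jhat αh ≤ Jhat α)
    (Δ : Fin T → ℝ)
    (hΔ : Δ = (1 / (lam * (T : ℝ))) • ((Khat - K).mulVec αs)) :
    ∑ i, |αh i - αs i| ≤ 2 * (T : ℝ) * β * (⨆ t, |Δ t|) := by
  classical
  have hT' : (0 : ℝ) < T := by exact_mod_cast hT
  have hne : Nonempty (Fin T) := ⟨⟨0, hT⟩⟩
  -- symmetry of the matrices
  have hKs : Matrix.transpose K = K := by simpa [Matrix.IsHermitian] using hK.isHermitian
  have hKhs : Matrix.transpose Khat = Khat := by simpa [Matrix.IsHermitian] using hKhat.isHermitian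
  have hDs : Matrix.transpose (Khat - K) = Khat - K := by rw [Matrix.transpose_sub, hKhs, hKs]
  set d : Fin T → ℝ := αh - αs with hdv
  have hdapp : ∀ i, d i = αh i - αs i := fun i => rfl
  clear_value d
  set n2 : ℝ := ∑ i, (αh i - αs i) ^ 2 with hn2
  set n1 : ℝ := ∑ i, |αh i - αs i| with hn1v
  set s : ℝ := ⨆ t, |Δ t| with hsv
  have hn1nonneg : 0 ≤ n1 := Finset.sum_nonneg fun i _ => abs_nonneg _
  have hn2nonneg : 0 ≤ n2 := Finset.sum_nonneg fun i _ => sq_nonneg _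
  have hbdd : BddAbove (Set.range fun t => |Δ t|) :=
    Set.Finite.bddAbove (Set.finite_range _)
  have hΔle : ∀ i, |Δ i| ≤ s := fun i => le_ciSup hbdd i
  have hsnonneg : 0 ≤ s := le_trans (abs_nonneg _) (hΔle (Classical.arbitrary _))
  clear_value n2 n1 s
  set L : ℝ := 1 / (2 * lam * (T : ℝ) ^ 2) with hLv
  have hL : 0 < L := by
    apply div_pos one_pos; positivity
  set c : ℝ := 1 / (2 * (T : ℝ) * β) with hcv
  have hc : 0 < c := by apply div_pos one_pos; positivity
  clear_value L c
  set P : ℝ := dotProduct αs ((Khat - K).mulVec d) with hPv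
  set QD : ℝ := dotProduct d ((Khat - K).mulVec d) with hQDv
  set Qh : ℝ := dotProduct d (Khat.mulVec d) with hQhv
  have hQhpos : 0 ≤ Qh := by
    rw [hQhv]; have := hKhat.dotProduct_mulVec_nonneg d; simpa using this
  clear_value P QD Qh
  -- key inequality for each t ∈ (0,1]
  have key : ∀ t : ℝ, 0 < t → t ≤ 1 → 2 * L * P + c * n2 ≤ t * (c * n2 - L * QD) := by
    intro t ht0 ht1
    set w : Fin T → ℝ := αs + t • d with hwv
    have hw : t • αh + (1 - t) • αs = w := by
      ext i
      simp only [hwv, Pi.add_apply, Pi.smul_apply, smul_eq_mul, hdapp]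
      ring
    have hF : F w ≤ t * F αh + (1 - t) * F αs - c * t * (1 - t) * n2 := by
      have := hFsc αh αs t ht0.le ht1
      rw [hw] at this
      simpa [hcv, hn2] using this
    -- expansions
    have hqKw := stmt5_expand K hKs αs d t
    have hqhw := stmt5_expand Khat hKhs αs d t
    have hqDw := stmt5_expand (Khat - K) hDs αs d t
    have hαh : αs + (1 : ℝ) • d = αh := by ext i; simp [hdapp]
    have hqhαh := stmt5_expand Khat hKhs αs d 1
    rw [hαh] at hqhαh
    have hqKαh := stmt5_expand K hKs αs d 1
    rw [hαh] at hqKαh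
    -- relate K̂, K, D quadratic/cross terms
    have hsub : ∀ u v : Fin T → ℝ, dotProduct u ((Khat - K).mulVec v) =
        dotProduct u (Khat.mulVec v) - dotProduct u (K.mulVec v) := by
      intro u v
      rw [Matrix.sub_mulVec, dotProduct_sub]
    have h1 : J αs ≤ J w := hmin w
    have h2 : Jhat αh ≤ Jhat αs := hminh αs
    rw [hJ αs, hJ w] at h1
    rw [hJhat αh, hJhat αs] at h2
    rw [hqKw] at h1
    rw [hqhαh] at h2
    have hPe : P = dotProduct αs (Khat.mulVec d) - dotProduct αs (K.mulVec d) :=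
      hPv.trans (hsub αs d)
    have hQDe : QD = Qh - dotProduct d (K.mulVec d) := by
      rw [hQDv, hsub d d, hQhv]
    have hβ2 : F αh - F αs ≤
        -(L * (2 * dotProduct αs (Khat.mulVec d) + Qh)) := by
      rw [hQhv]; linarith
    have e2t := mul_le_mul_of_nonneg_left hβ2 ht0.le
    have hnn : 0 ≤ t * (1 - t) * L * Qh :=
      mul_nonneg (mul_nonneg (mul_nonneg ht0.le (sub_nonneg.mpr ht1)) hL.le) hQhpos
    have hmul : t * (2 * L * P + c * n2) ≤ t * (t * (c * n2 - L * QD)) := by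
      rw [hPe, hQDe]
      nlinarith [h1, hF, e2t, hnn]
    exact (mul_le_mul_iff_right₀ ht0).mp hmul
  -- pass to the limit t → 0⁺
  have hA : 2 * L * P + c * n2 ≤ 0 := by
    by_contra h
    push_neg at h
    have hC : 0 < c * n2 - L * QD := by
      have := key 1 one_pos le_rfl
      linarith
    set t : ℝ := min 1 ((2 * L * P + c * n2) / (2 * (c * n2 - L * QD))) with htv
    have ht0 : 0 < t := lt_min one_pos (div_pos h (by linarith))
    have ht1 : t ≤ 1 := min_le_left _ _
    have := key t ht0 ht1
    have h2 : t * (c * n2 - L * QD) ≤ (2 * L * P + c * n2) / 2 := by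
      have hle : t ≤ (2 * L * P + c * n2) / (2 * (c * n2 - L * QD)) := min_le_right _ _
      have := mul_le_mul_of_nonneg_right hle hC.le
      calc t * (c * n2 - L * QD)
          ≤ (2 * L * P + c * n2) / (2 * (c * n2 - L * QD)) * (c * n2 - L * QD) := this
        _ = (2 * L * P + c * n2) / 2 := by field_simp
    linarith
  -- relate P with Δ
  have hPsym : P = dotProduct d ((Khat - K).mulVec αs) :=
    hPv.trans (stmt5_symm_dot (Khat - K) hDs αs d)
  have hΔd : ∑ i, Δ i * d i = (1 / (lam * (T : ℝ))) * P := by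
    rw [hPsym, hΔ]
    simp only [dotProduct, Pi.smul_apply, smul_eq_mul, Finset.mul_sum]
    exact Finset.sum_congr rfl fun i _ => by ring
  -- bound: -⟨Δ, d⟩ ≤ s * n1
  have hdot : -∑ i, Δ i * d i ≤ s * n1 := by
    have h1 : -∑ i, Δ i * d i = ∑ i, -(Δ i * d i) := by rw [Finset.sum_neg_distrib]
    rw [h1, hn1v, Finset.mul_sum]
    apply Finset.sum_le_sum
    intro i _
    have : -(Δ i * d i) ≤ |Δ i| * |αh i - αs i| := by
      rw [← abs_mul]
      calc -(Δ i * d i) ≤ |Δ i * d i| := neg_le_abs _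
        _ = |Δ i * (αh i - αs i)| := by rw [hdapp]
    exact this.trans (mul_le_mul_of_nonneg_right (hΔle i) (abs_nonneg _))
  -- c * n2 ≤ (1/T) * s * n1
  have hmain : c * n2 ≤ (1 / (T : ℝ)) * (s * n1) := by
    have h2LP : 2 * L * P = (1 / (T : ℝ)) * ((1 / (lam * (T : ℝ))) * P) := by
      rw [hLv]; field_simp
    have : c * n2 ≤ -(2 * L * P) := by linarith
    rw [h2LP, ← hΔd] at this
    calc c * n2 ≤ -((1 / (T : ℝ)) * ∑ i, Δ i * d i) := this
      _ = (1 / (T : ℝ)) * (-∑ i, Δ i * d i) := by ring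
      _ ≤ (1 / (T : ℝ)) * (s * n1) := by
          apply mul_le_mul_of_nonneg_left hdot (by positivity)
  -- Cauchy–Schwarz: n1² ≤ T * n2
  have hCS : n1 ^ 2 ≤ (T : ℝ) * n2 := by
    have := Finset.sum_mul_sq_le_sq_mul_sq Finset.univ (fun _ : Fin T => (1 : ℝ))
      (fun i => |αh i - αs i|)
    simp only [one_mul, one_pow, Finset.sum_const, Finset.card_univ, Fintype.card_fin,
      nsmul_eq_mul, mul_one, sq_abs] at this
    simpa [hn1v, hn2] using this
  -- conclude
  rcases eq_or_lt_of_le hn1nonneg with h0 | h0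
  · rw [← h0]
    have : 0 ≤ 2 * (T : ℝ) * β := by positivity
    exact mul_nonneg this hsnonneg
  · have h1 : c * n1 ^ 2 ≤ c * ((T : ℝ) * n2) := mul_le_mul_of_nonneg_left hCS hc.le
    have h2 : c * ((T : ℝ) * n2) ≤ (T : ℝ) * ((1 / (T : ℝ)) * (s * n1)) := by
      have := mul_le_mul_of_nonneg_left hmain hT'.le
      linarith [this]
    have h3 : (T : ℝ) * ((1 / (T : ℝ)) * (s * n1)) = s * n1 := by field_simp
    have h4 : c * n1 ^ 2 ≤ s * n1 := by linarith
    have h5 : c * n1 ≤ s := by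
      have := (mul_le_mul_iff_left₀ h0).mp (by nlinarith : (c * n1) * n1 ≤ s * n1)
      exact this
    have hcval : 2 * (T : ℝ) * β * (c * n1) = n1 := by
      rw [hcv]; field_simp
    calc n1 = 2 * (T : ℝ) * β * (c * n1) := hcval.symm
      _ ≤ 2 * (T : ℝ) * β * s := by
          apply mul_le_mul_of_nonneg_left h5 (by positivity)
end

section
/- With Δ = (1/(λT))(K̂ - K)α* where K = X̃ᵀX̃, K̂ = X̃ᵀRᵀRX̃, and w* = -(1/(λT))X̃α*: if R satisfies the basis-vector condition (‖Re_i‖² = 1 ± θ and |⟨Re_i, Re_j⟩| ≤ θ for i ≠ j), then ‖Δ‖_∞ ≤ 2θγ‖w*‖₁, where γ = max_t ‖x_t‖₁ and the columns of X̃ are y_t x_t with y_t ∈ {-1,+1}. -/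
/-- bound `‖Δ‖_∞ ≤ 2θγ‖w*‖₁` for
`Δ = (1/(λT))(K̂ - K)α*`, `K = X̃ᵀX̃`, `K̂ = X̃ᵀRᵀRX̃`,
`w* = -(1/(λT))X̃α*`, under the basis-vector condition on `R`. -/
theorem stmt14 {d k T : ℕ} (lam θ γ : ℝ) (hlam : 0 < lam) (hθ : 0 ≤ θ)
    (x : Fin T → Fin d → ℝ) (y : Fin T → ℝ) (hy : ∀ t, y t = 1 ∨ y t = -1)
    (Xt : Matrix (Fin d) (Fin T) ℝ) (hXt : ∀ i t, Xt i t = y t * x t i)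
    (R : Matrix (Fin k) (Fin d) ℝ)
    (hdiag : ∀ i : Fin d,
      |(∑ a, R.mulVec (Pi.single i 1) a * R.mulVec (Pi.single i 1) a) - 1| ≤ θ)
    (hoff : ∀ i j : Fin d, i ≠ j →
      |∑ a, R.mulVec (Pi.single i 1) a * R.mulVec (Pi.single j 1) a| ≤ θ)
    (hγ : ∀ t, (∑ i, |x t i|) ≤ γ)
    (αs : Fin T → ℝ) (ws : Fin d → ℝ)
    (hw : ws = (-(1 / (lam * (T : ℝ)))) • Xt.mulVec αs)
    (Δ : Fin T → ℝ)
    (hΔ : Δ = (1 / (lam * (T : ℝ))) •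
      ((Xt.transpose * R.transpose * R * Xt - Xt.transpose * Xt).mulVec αs)) :
    ∀ t, |Δ t| ≤ 2 * θ * γ * (∑ i, |ws i|) := by
  intro t
  -- rewrite the basis-vector hypotheses in matrix-entry form
  have hsingle : ∀ (i : Fin d) (a : Fin k), R.mulVec (Pi.single i 1) a = R a i := by
    intro i a
    simp [Matrix.mulVec, dotProduct, Pi.single_apply, mul_ite, mul_one,
      mul_zero, Finset.sum_ite_eq, Finset.sum_ite_eq']
  have hG : ∀ i j : Fin d,
      |(∑ a, R a i * R a j) - (if i = j then (1:ℝ) else 0)| ≤ θ := by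
    intro i j
    by_cases h : i = j
    · subst h
      simpa [hsingle] using hdiag i
    · simpa [hsingle, h] using hoff i j h
  -- key identity
  have hws : ∀ j, (1 / (lam * (T : ℝ))) * (Xt.mulVec αs) j = -(ws j) := by
    intro j
    rw [hw]
    simp
  set v := Xt.mulVec αs with hv
  have hA : ((Xt.transpose * R.transpose * R).mulVec v) t
      = ∑ j, ∑ a, ∑ i, (Xt i t * R a i) * R a j * v j := by
    simp only [Matrix.mulVec, dotProduct, Matrix.mul_apply, Matrix.transpose_apply,
      Finset.sum_mul]
  have hA2 : ((Xt.transpose * R.transpose * R).mulVec v) t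
      = ∑ i, ∑ j, Xt i t * ((∑ a, R a i * R a j) * v j) := by
    rw [hA]
    rw [show (∑ j, ∑ a, ∑ i, (Xt i t * R a i) * R a j * v j)
        = ∑ j, ∑ i, ∑ a, (Xt i t * R a i) * R a j * v j from
      Finset.sum_congr rfl fun j _ => Finset.sum_comm]
    rw [Finset.sum_comm]
    refine Finset.sum_congr rfl fun i _ => Finset.sum_congr rfl fun j _ => ?_
    rw [Finset.sum_mul, Finset.mul_sum]
    exact Finset.sum_congr rfl fun a _ => by ring
  have hB : (Xt.transpose.mulVec v) t = ∑ i, Xt i t * v i := by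
    simp [Matrix.mulVec, dotProduct, Matrix.transpose_apply]
  have key : Δ t = ∑ i, ∑ j,
      Xt i t * (((∑ a, R a i * R a j) - if i = j then (1:ℝ) else 0) * (-(ws j))) := by
    rw [hΔ]
    simp only [Pi.smul_apply, smul_eq_mul, Matrix.sub_mulVec, Pi.sub_apply, ← hv]
    have h1 : (Xt.transpose * R.transpose * R * Xt).mulVec αs
        = (Xt.transpose * R.transpose * R).mulVec v := by
      rw [hv, Matrix.mulVec_mulVec]
    have h2 : (Xt.transpose * Xt).mulVec αs = Xt.transpose.mulVec v := by
      rw [hv, Matrix.mulVec_mulVec]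
    rw [h1, h2, hA2, hB]
    have step : ∀ i j : Fin d,
        Xt i t * (((∑ a, R a i * R a j) - if i = j then (1:ℝ) else 0) * (-(ws j)))
        = (1 / (lam * (T : ℝ))) * (Xt i t * ((∑ a, R a i * R a j) * v j))
          - (if i = j then (1:ℝ) else 0) * ((1 / (lam * (T : ℝ))) * (Xt i t * v j)) := by
      intro i j
      rw [← hws j]
      ring
    simp only [step, Finset.sum_sub_distrib, ← Finset.mul_sum, ite_mul, zero_mul,
      Finset.sum_ite_eq, Finset.mem_univ, if_true]
    ring
  -- bound
  have habsX : ∀ i, |Xt i t| = |x t i| := by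
    intro i
    rw [hXt]
    rcases hy t with h | h <;> simp [h, abs_mul]
  have hγ0 : (0:ℝ) ≤ γ := le_trans (Finset.sum_nonneg fun i _ => abs_nonneg _) (hγ t)
  have hS0 : (0:ℝ) ≤ ∑ i, |ws i| := Finset.sum_nonneg fun i _ => abs_nonneg _
  calc |Δ t| ≤ ∑ i, ∑ j, |x t i| * (θ * |ws j|) := by
        rw [key]
        refine le_trans (Finset.abs_sum_le_sum_abs _ _) (Finset.sum_le_sum fun i _ => ?_)
        refine le_trans (Finset.abs_sum_le_sum_abs _ _) (Finset.sum_le_sum fun j _ => ?_)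
        rw [abs_mul, abs_mul, habsX, abs_neg]
        exact mul_le_mul_of_nonneg_left
          (mul_le_mul_of_nonneg_right (hG i j) (abs_nonneg _)) (abs_nonneg _)
    _ = θ * ((∑ i, |x t i|) * (∑ j, |ws j|)) := by
        simp only [← Finset.sum_mul, ← Finset.mul_sum]
        ring
    _ ≤ θ * (γ * (∑ j, |ws j|)) :=
        mul_le_mul_of_nonneg_left (mul_le_mul_of_nonneg_right (hγ t) hS0) hθ
    _ ≤ 2 * θ * γ * (∑ i, |ws i|) := by nlinarith [mul_nonneg hθ (mul_nonneg hγ0 hS0)]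
end

section
/- Combining the dual perturbation bounds: under the hypotheses that ℓ is β-strongly smooth and convex, K, K̂ PSD, F (1/(Tβ))-strongly convex, and Δ = (1/(λT))(K̂-K)α*, the minimizers of the two kernel-regularized duals satisfy (1/(λ²T²)) (α̂* - α*)ᵀ K̂ (α̂* - α*) ≤ (2β/λ) ‖Δ‖_∞². -/
private lemma stmt15_dot_symm {T : ℕ} (M : Matrix (Fin T) (Fin T) ℝ) (hM : M.IsHermitian)
    (a b : Fin T → ℝ) :
    dotProduct a (M.mulVec b) = dotProduct b (M.mulVec a) := by
  have hMt : M.transpose = M := by have h := hM; simp at h; exact h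
  simp only [dotProduct, Matrix.mulVec, Finset.mul_sum]
  rw [Finset.sum_comm]
  refine Finset.sum_congr rfl fun i _ => Finset.sum_congr rfl fun j _ => ?_
  have h : M j i = M i j := by
    conv_lhs => rw [← hMt]
    exact Matrix.transpose_apply M j i
  rw [h]; ring

private lemma stmt15_expand {T : ℕ} (M : Matrix (Fin T) (Fin T) ℝ) (hM : M.IsHermitian)
    (a d : Fin T → ℝ) (t : ℝ) :
    dotProduct (a + t • d) (M.mulVec (a + t • d)) =
      dotProduct a (M.mulVec a) + 2 * t * dotProduct d (M.mulVec a)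
        + t ^ 2 * dotProduct d (M.mulVec d) := by
  have hs := stmt15_dot_symm M hM a d
  simp only [Matrix.mulVec_add, Matrix.mulVec_smul, dotProduct_add,
    add_dotProduct, dotProduct_smul, smul_dotProduct, smul_eq_mul]
  rw [hs]; ring

private lemma stmt15_aff {a b : ℝ} (h : ∀ t : ℝ, 0 < t → t ≤ 1 → a + t * b ≤ 0) : a ≤ 0 := by
  by_contra hc
  push_neg at hc
  have hb1 : (0:ℝ) < |b| + 1 := by positivity
  set t := min 1 (a / (2 * (|b| + 1))) with ht
  have ht0 : 0 < t := lt_min one_pos (by positivity)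
  have ht1 : t ≤ 1 := min_le_left _ _
  have h2 := h t ht0 ht1
  have h3 : t ≤ a / (2 * (|b| + 1)) := min_le_right _ _
  have htb : t * |b| ≤ a / 2 := by
    calc t * |b| ≤ a / (2 * (|b| + 1)) * |b| :=
          mul_le_mul_of_nonneg_right h3 (abs_nonneg b)
      _ ≤ a / 2 := by
          rw [div_mul_eq_mul_div, div_le_div_iff₀ (by positivity) two_pos]
          nlinarith [abs_nonneg b]
  have h4 : t * (-|b|) ≤ t * b := mul_le_mul_of_nonneg_left (neg_abs_le b) ht0.le
  nlinarith

set_option maxHeartbeats 1000000 in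
/-- chaining the dual perturbation bounds:
`(1/(λ²T²)) (α̂*-α*)ᵀK̂(α̂*-α*) ≤ (2β/λ)‖Δ‖_∞²`. -/
theorem stmt15 {T : ℕ} (hT : 0 < T) (lam β : ℝ) (hlam : 0 < lam) (hβ : 0 < β)
    (F : (Fin T → ℝ) → ℝ) (hFconv : ConvexOn ℝ Set.univ F)
    (hFdiff : Differentiable ℝ F)
    (hFsc : ∀ u v : Fin T → ℝ, ∀ t : ℝ, 0 ≤ t → t ≤ 1 →
      F (t • u + (1 - t) • v) ≤ t * F u + (1 - t) * F v -
        (1 / (2 * (T : ℝ) * β)) * t * (1 - t) * ∑ i, (u i - v i) ^ 2)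
    (K Khat : Matrix (Fin T) (Fin T) ℝ) (hK : K.PosSemidef)
    (hKhat : Khat.PosSemidef)
    (J Jhat : (Fin T → ℝ) → ℝ)
    (hJ : ∀ α, J α = F α + (1 / (2 * lam * (T : ℝ) ^ 2)) *
      dotProduct α (K.mulVec α))
    (hJhat : ∀ α, Jhat α = F α + (1 / (2 * lam * (T : ℝ) ^ 2)) *
      dotProduct α (Khat.mulVec α))
    (αs : Fin T → ℝ) (hmin : ∀ α, J αs ≤ J α)
    (αh : Fin T → ℝ) (hminh : ∀ α, Jhat αh ≤ Jhat α)
    (Δ : Fin T → ℝ)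
    (hΔ : Δ = (1 / (lam * (T : ℝ))) • ((Khat - K).mulVec αs)) :
    (1 / (lam ^ 2 * (T : ℝ) ^ 2)) *
        dotProduct (αh - αs) (Khat.mulVec (αh - αs)) ≤
      (2 * β / lam) * (⨆ t, |Δ t|) ^ 2 := by
  have hT0 : (0:ℝ) < T := by exact_mod_cast hT
  have hTne : (T:ℝ) ≠ 0 := hT0.ne'
  have hlamne : lam ≠ 0 := hlam.ne'
  have hβne : β ≠ 0 := hβ.ne'
  set d : Fin T → ℝ := αh - αs with hd
  set S : ℝ := ∑ i, (d i) ^ 2 with hS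
  set L1 : ℝ := ∑ i, |d i| with hL1
  set Mx : ℝ := ⨆ t, |Δ t| with hMx
  set Pd : ℝ := dotProduct d (Khat.mulVec d) with hPd
  set s1 : ℝ := dotProduct d (K.mulVec d) with hs1
  set a1 : ℝ := dotProduct d (K.mulVec αs) with ha1
  set a2p : ℝ := dotProduct d (Khat.mulVec αs) with ha2p
  set dD : ℝ := ∑ i, d i * Δ i with hdD
  -- basic facts
  have hPd0 : 0 ≤ Pd := by have := hKhat.dotProduct_mulVec_nonneg d; rw [hPd]; simpa using this
  have hs10 : 0 ≤ s1 := by have := hK.dotProduct_mulVec_nonneg d; rw [hs1]; simpa using this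
  have hS0 : 0 ≤ S := Finset.sum_nonneg fun i _ => sq_nonneg _
  have hL10 : 0 ≤ L1 := Finset.sum_nonneg fun i _ => abs_nonneg _
  have hMxi : ∀ i, |Δ i| ≤ Mx := by
    intro i; rw [hMx]
    exact le_ciSup (Set.Finite.bddAbove (Set.finite_range fun t => |Δ t|)) i
  have hMx0 : 0 ≤ Mx := le_trans (abs_nonneg (Δ ⟨0, hT⟩)) (hMxi ⟨0, hT⟩)
  have hCS : L1 ^ 2 ≤ (T:ℝ) * S := by
    rw [hL1, hS]
    have := Finset.sum_mul_sq_le_sq_mul_sq Finset.univ (fun _ => (1:ℝ)) (fun i => |d i|)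
    simpa [sq_abs] using this
  have hdD1 : -(L1 * Mx) ≤ dD := by
    rw [hdD, hL1]
    have hterm : ∀ i ∈ Finset.univ, -(|d i| * Mx) ≤ d i * Δ i := by
      intro i _
      have h1 : |d i * Δ i| ≤ |d i| * Mx := by
        rw [abs_mul]; exact mul_le_mul_of_nonneg_left (hMxi i) (abs_nonneg _)
      linarith [neg_abs_le (d i * Δ i)]
    calc -((∑ i, |d i|) * Mx) = ∑ i, -(|d i| * Mx) := by
          rw [Finset.sum_mul, ← Finset.sum_neg_distrib]
      _ ≤ ∑ i, d i * Δ i := Finset.sum_le_sum hterm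
  -- relation between dD and the matrices
  have hrel : lam * (T:ℝ) * dD = a2p - a1 := by
    have hdD2 : dD = (1/(lam * (T:ℝ))) * (a2p - a1) := by
      rw [hdD, hΔ, ha2p, ha1]
      simp only [dotProduct, Pi.smul_apply, smul_eq_mul, Matrix.sub_mulVec,
        Pi.sub_apply, ← Finset.sum_sub_distrib, Finset.mul_sum]
      exact Finset.sum_congr rfl fun i _ => by ring
    rw [hdD2]; field_simp
  -- substitution lemma
  have hsub : dotProduct d (Khat.mulVec αh) = a2p + Pd := by
    have hαh : αh = αs + d := by funext i; simp [hd]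
    conv_lhs => rw [hαh]
    simp only [Matrix.mulVec_add, dotProduct_add]
    rfl
  -- the per-t inequality
  have key : ∀ t : ℝ, 0 < t → t ≤ 1 →
      (lam * (T:ℝ) * S + β * Pd + lam * (T:ℝ) * β * dD)
        + t * (-(lam * (T:ℝ) * S) - (β/2) * (s1 + Pd)) ≤ 0 := by
    intro t ht0 ht1
    have h1 := hmin (αs + t • d)
    have h2 := hminh (αh + (-t) • d)
    rw [hJ, hJ] at h1
    rw [hJhat, hJhat] at h2
    rw [stmt15_expand K hK.1 αs d t] at h1
    rw [stmt15_expand Khat hKhat.1 αh d (-t)] at h2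
    rw [hsub] at h2
    have e1 : αs + t • d = t • αh + (1 - t) • αs := by
      funext i
      simp only [hd, Pi.add_apply, Pi.smul_apply, Pi.sub_apply, smul_eq_mul]
      ring
    have e2 : αh + (-t) • d = t • αs + (1 - t) • αh := by
      funext i
      simp only [hd, Pi.add_apply, Pi.smul_apply, Pi.sub_apply, smul_eq_mul]
      ring
    rw [e1] at h1
    rw [e2] at h2
    have h3 := hFsc αh αs t ht0.le ht1
    have h4 := hFsc αs αh t ht0.le ht1
    have hsum3 : ∑ i, (αh i - αs i) ^ 2 = S := by
      rw [hS]
      exact Finset.sum_congr rfl fun i _ => by rw [hd]; simp only [Pi.sub_apply]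
    have hsum4 : ∑ i, (αs i - αh i) ^ 2 = S := by
      rw [hS]
      refine Finset.sum_congr rfl fun i _ => ?_
      rw [hd]; simp only [Pi.sub_apply]; ring
    rw [hsum3] at h3
    rw [hsum4] at h4
    -- combined optimality inequality
    have comb : 0 ≤ -(2 * (1 / (2 * (T:ℝ) * β)) * t * (1-t) * S)
        + (1 / (2 * lam * (T:ℝ)^2)) * (2 * t * a1 - 2 * t * (a2p + Pd)
          + t^2 * (s1 + Pd)) := by
      rw [ha1, ha2p, hPd, hs1]
      linarith [h1, h2, h3, h4]
    -- cleared and factored form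
    have comb2 : 0 ≤ t * (-(2 * lam * (T:ℝ) * (1-t) * S)
        - 2 * β * (lam * (T:ℝ) * dD) - 2 * β * Pd + β * t * (s1 + Pd)) := by
      have e : (2 * lam * (T:ℝ)^2 * β) * (-(2 * (1 / (2 * (T:ℝ) * β)) * t * (1-t) * S)
          + (1 / (2 * lam * (T:ℝ)^2)) * (2 * t * a1 - 2 * t * (a2p + Pd)
            + t^2 * (s1 + Pd)))
          = t * (-(2 * lam * (T:ℝ) * (1-t) * S)
            - 2 * β * (lam * (T:ℝ) * dD) - 2 * β * Pd + β * t * (s1 + Pd)) := by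
        rw [hrel]
        field_simp
        ring
      rw [← e]
      exact mul_nonneg (by positivity) comb
    have hW : 0 ≤ -(2 * lam * (T:ℝ) * (1-t) * S)
        - 2 * β * (lam * (T:ℝ) * dD) - 2 * β * Pd + β * t * (s1 + Pd) := by
      have h0 : t * 0 ≤ t * (-(2 * lam * (T:ℝ) * (1-t) * S)
          - 2 * β * (lam * (T:ℝ) * dD) - 2 * β * Pd + β * t * (s1 + Pd)) := by
        simpa using comb2
      exact le_of_mul_le_mul_left h0 ht0
    linarith [hW]
  have hA0 : lam * (T:ℝ) * S + β * Pd + lam * (T:ℝ) * β * dD ≤ 0 := stmt15_aff key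
  -- chain of bounds
  have h5' := mul_le_mul_of_nonneg_left hdD1 (show (0:ℝ) ≤ lam * (T:ℝ) * β by positivity)
  have h5 : lam * (T:ℝ) * S + β * Pd ≤ lam * (T:ℝ) * β * (L1 * Mx) := by
    linarith [hA0, h5']
  have hSb : S ≤ β * (L1 * Mx) := by
    nlinarith [h5, mul_nonneg hβ.le hPd0, mul_pos hlam hT0]
  have hL1b : L1 ≤ (T:ℝ) * β * Mx := by
    rcases eq_or_lt_of_le hL10 with h0 | h0
    · rw [← h0]; exact mul_nonneg (mul_nonneg hT0.le hβ.le) hMx0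
    · nlinarith [hCS, mul_le_mul_of_nonneg_left hSb hT0.le, h0]
  have h7 : β * Pd ≤ lam * (T:ℝ) * β * (L1 * Mx) := by
    linarith [h5, mul_nonneg (mul_nonneg hlam.le hT0.le) hS0]
  have h8 : Pd ≤ lam * (T:ℝ) * (L1 * Mx) := by nlinarith [h7, hβ]
  have h9 : lam * (T:ℝ) * (L1 * Mx) ≤ lam * (T:ℝ)^2 * β * Mx^2 := by
    nlinarith [mul_le_mul_of_nonneg_left hL1b
      (mul_nonneg (mul_nonneg hlam.le hT0.le) hMx0)]
  have hPdb : Pd ≤ lam * (T:ℝ)^2 * β * Mx^2 := le_trans h8 h9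
  calc (1 / (lam ^ 2 * (T:ℝ) ^ 2)) * Pd
      ≤ (1 / (lam ^ 2 * (T:ℝ) ^ 2)) * (lam * (T:ℝ)^2 * β * Mx^2) :=
        mul_le_mul_of_nonneg_left hPdb (by positivity)
    _ = (β / lam) * Mx^2 := by field_simp
    _ ≤ (2 * β / lam) * Mx^2 := by
        have h10 : 0 ≤ (β / lam) * Mx^2 :=
          mul_nonneg (div_nonneg hβ.le hlam.le) (sq_nonneg _)
        have h11 : (2 * β / lam) * Mx^2 = (β / lam) * Mx^2 + (β / lam) * Mx^2 := by ring
        linarith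
end
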